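/- Let H be a Hopf algebroid over R with anchor, and suppose F = Σᵢ xᵢ ⊗_R yᵢ ∈ H ⊗_R H satisfies the cocycle identity ((Δ ⊗_R id)F)·F¹² = ((id ⊗_R Δ)F)·F²³ in H ⊗_R H ⊗_R H and the counit identity (ε ⊗_R id)F = 1_H = (id ⊗_R ε)F. Define a new multiplication on R by a *_F b = Σᵢ xᵢ(a)·yᵢ(b). Then (R, *_F) is an associative algebra with unit 1_R. -/

import Mathlib

open TensorProduct

noncomputable section

variable (k : Type) {H R : Type} [CommRing k] [Ring H] [Algebra k H] [Ring R] [Algebra k R]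

/-- The relation submodule defining the `(R,R)`-bimodule tensor product `H ⊗_R H`,
where the right `R`-action on `H` is `h · a = bf a * h` and the left action is
`a · h = af a * h`.  Generators: `(bf a * x) ⊗ y - x ⊗ (af a * y)`. -/
def relQ (af bf : R → H) : Submodule k (H ⊗[k] H) :=
  Submodule.span k {z | ∃ (a : R) (x y : H), z = (bf a * x) ⊗ₜ[k] y - x ⊗ₜ[k] (af a * y)}

/-- `H ⊗_R H` as a quotient of `H ⊗[k] H`. -/
abbrev HtQ (af bf : R → H) : Type _ := (H ⊗[k] H) ⧸ relQ k af bf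

/-- The canonical projection `H ⊗[k] H → H ⊗_R H`. -/
def prQ (af bf : R → H) : H ⊗[k] H →ₗ[k] HtQ k af bf := (relQ k af bf).mkQ

lemma relQ_mul_right (af bf : R → H) {w : H ⊗[k] H} (hw : w ∈ relQ k af bf)
    (u : H ⊗[k] H) : w * u ∈ relQ k af bf := by
  induction hw using Submodule.span_induction with
  | mem z hz =>
      obtain ⟨a, x, y, rfl⟩ := hz
      induction u using TensorProduct.induction_on with
      | zero => simpa using (relQ k af bf).zero_mem
      | tmul p q =>
          rw [sub_mul, Algebra.TensorProduct.tmul_mul_tmul,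
            Algebra.TensorProduct.tmul_mul_tmul]
          exact Submodule.subset_span ⟨a, x * p, y * q, by rw [mul_assoc, mul_assoc]⟩
      | add u v hu hv => rw [mul_add]; exact add_mem hu hv
  | zero => simpa using (relQ k af bf).zero_mem
  | add u v _ _ hu hv => rw [add_mul]; exact add_mem hu hv
  | smul c u _ hu => rw [smul_mul_assoc]; exact Submodule.smul_mem _ c hu

/-- Right multiplication by `u ∈ H ⊗ H` descends to `H ⊗_R H`. -/
def mulRightQ (af bf : R → H) (u : H ⊗[k] H) : HtQ k af bf →ₗ[k] HtQ k af bf :=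
  Submodule.mapQ _ _ (LinearMap.mulRight k u)
    (fun w hw => by simpa using relQ_mul_right k af bf hw u)

lemma mulRightQ_mk (af bf : R → H) (u w : H ⊗[k] H) :
    mulRightQ k af bf u (prQ k af bf w) = prQ k af bf (w * u) := by
  simp [mulRightQ, prQ, Submodule.mapQ_apply]

/-- `u ↦ (right multiplication by `u` on `H ⊗_R H`)`, as a linear map. -/
def mulRightQL (af bf : R → H) :
    (H ⊗[k] H) →ₗ[k] (HtQ k af bf →ₗ[k] HtQ k af bf) where
  toFun := mulRightQ k af bf
  map_add' u v := by
    apply LinearMap.ext; intro x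
    obtain ⟨w, rfl⟩ := (relQ k af bf).mkQ_surjective x
    show mulRightQ k af bf (u + v) (prQ k af bf w)
        = mulRightQ k af bf u (prQ k af bf w) + mulRightQ k af bf v (prQ k af bf w)
    rw [mulRightQ_mk, mulRightQ_mk, mulRightQ_mk, mul_add, map_add]
  map_smul' c u := by
    apply LinearMap.ext; intro x
    obtain ⟨w, rfl⟩ := (relQ k af bf).mkQ_surjective x
    show mulRightQ k af bf (c • u) (prQ k af bf w) = c • mulRightQ k af bf u (prQ k af bf w)
    rw [mulRightQ_mk, mulRightQ_mk, mul_smul_comm, map_smul]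

/-- The map `Ψ : H ⊗ (H ⊗ H) → H ⊗_R H`, `h₁ ⊗ h₂ ⊗ h₃ ↦ Δ(h₁)(h₂ ⊗ h₃)`,
associated to a "coproduct" `D : H → H ⊗_R H`. -/
def PsiQ (af bf : R → H) (D : H →ₗ[k] HtQ k af bf) :
    H ⊗[k] (H ⊗[k] H) →ₗ[k] HtQ k af bf :=
  TensorProduct.lift ((mulRightQL k af bf).flip ∘ₗ D)

/-- The action of `x ⊗ y ⊗ w ∈ H ⊗ H^op ⊗ H^op` on `H ⊗ H ⊗ H`. -/
def Lact (x y w : H) : H ⊗[k] (H ⊗[k] H) →ₗ[k] H ⊗[k] (H ⊗[k] H) :=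
  TensorProduct.map (LinearMap.mulLeft k x)
    (TensorProduct.map (LinearMap.mulRight k y) (LinearMap.mulRight k w))

/-- The target map `β`, as a `k`-linear map `R →ₗ H`. -/
def unopL (β : R →ₐ[k] Hᵐᵒᵖ) : R →ₗ[k] H :=
  (MulOpposite.opLinearEquiv k).symm.toLinearMap ∘ₗ β.toLinearMap

/-- `φ_α`-type map: `φ (x ⊗ y) a = s (μ(x) a) * y`. -/
def phiAL (μ : H →ₐ[k] Module.End k R) (s : R →ₗ[k] H) :
    (H ⊗[k] H) →ₗ[k] R →ₗ[k] H :=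
  TensorProduct.lift (LinearMap.mk₂ k
    (fun x y => LinearMap.mulRight k y ∘ₗ s ∘ₗ (μ x : R →ₗ[k] R))
    (by intro x₁ x₂ y; apply LinearMap.ext; intro a
        simp [map_add, add_mul])
    (by intro c x y; apply LinearMap.ext; intro a
        simp [map_smul, smul_mul_assoc])
    (by intro x y₁ y₂; apply LinearMap.ext; intro a
        simp [mul_add])
    (by intro c x y; apply LinearMap.ext; intro a
        simp [mul_smul_comm]))

/-- `φ_β`-type map: `φ (x ⊗ y) a = s (μ(y) a) * x`. -/
def phiBL (μ : H →ₐ[k] Module.End k R) (s : R →ₗ[k] H) :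
    (H ⊗[k] H) →ₗ[k] R →ₗ[k] H :=
  TensorProduct.lift (LinearMap.mk₂ k
    (fun x y => LinearMap.mulRight k x ∘ₗ s ∘ₗ (μ y : R →ₗ[k] R))
    (by intro x₁ x₂ y; apply LinearMap.ext; intro a
        simp [mul_add])
    (by intro c x y; apply LinearMap.ext; intro a
        simp [mul_smul_comm])
    (by intro x y₁ y₂; apply LinearMap.ext; intro a
        simp [map_add, add_mul])
    (by intro c x y; apply LinearMap.ext; intro a
        simp [map_smul, smul_mul_assoc]))

/-- Evaluation of an element of `H ⊗ H` on a pair of elements of `R` through the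
anchor: `(x ⊗ y)(a, b) = μ(x)(a) * μ(y)(b)`. -/
def ev2 (μ : H →ₐ[k] Module.End k R) :
    (H ⊗[k] H) →ₗ[k] R →ₗ[k] R →ₗ[k] R :=
  TensorProduct.lift (LinearMap.mk₂ k
    (fun x y => (LinearMap.mul k R).compl₁₂ (μ x : R →ₗ[k] R) (μ y : R →ₗ[k] R))
    (by intro x₁ x₂ y; apply LinearMap.ext; intro a; apply LinearMap.ext; intro b
        simp [map_add, add_mul])
    (by intro c x y; apply LinearMap.ext; intro a; apply LinearMap.ext; intro b
        simp [map_smul, smul_mul_assoc])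
    (by intro x y₁ y₂; apply LinearMap.ext; intro a; apply LinearMap.ext; intro b
        simp [map_add, mul_add])
    (by intro c x y; apply LinearMap.ext; intro a; apply LinearMap.ext; intro b
        simp [map_smul, mul_smul_comm]))

/-- `(ε ⊗_R id)`-type counit evaluation: `x ⊗ y ↦ s(ε x) * y`. -/
def e1 (s : R →ₗ[k] H) (ε : H →ₗ[k] R) : (H ⊗[k] H) →ₗ[k] H :=
  TensorProduct.lift (LinearMap.mk₂ k
    (fun x y => s (ε x) * y)
    (by intro x₁ x₂ y; simp [map_add, add_mul])
    (by intro c x y; simp [map_smul, smul_mul_assoc])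
    (by intro x y₁ y₂; simp [mul_add])
    (by intro c x y; simp [mul_smul_comm]))

/-- `(id ⊗_R ε)`-type counit evaluation: `x ⊗ y ↦ s(ε y) * x`. -/
def e2 (s : R →ₗ[k] H) (ε : H →ₗ[k] R) : (H ⊗[k] H) →ₗ[k] H :=
  TensorProduct.lift (LinearMap.mk₂ k
    (fun x y => s (ε y) * x)
    (by intro x₁ x₂ y; simp [mul_add])
    (by intro c x y; simp [mul_smul_comm])
    (by intro x y₁ y₂; simp [map_add, add_mul])
    (by intro c x y; simp [map_smul, smul_mul_assoc]))

/-- The relation submodule for the triple tensor product `H ⊗_R H ⊗_R H`. -/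
def relQ3 (af bf : R → H) : Submodule k ((H ⊗[k] H) ⊗[k] H) :=
  Submodule.span k
    ({w | ∃ (a : R) (x y z : H),
        w = ((bf a * x) ⊗ₜ[k] y) ⊗ₜ[k] z - (x ⊗ₜ[k] (af a * y)) ⊗ₜ[k] z} ∪
     {w | ∃ (a : R) (x y z : H),
        w = (x ⊗ₜ[k] (bf a * y)) ⊗ₜ[k] z - (x ⊗ₜ[k] y) ⊗ₜ[k] (af a * z)})

/-- `H ⊗_R H ⊗_R H`. -/
abbrev HtQ3 (af bf : R → H) : Type _ := ((H ⊗[k] H) ⊗[k] H) ⧸ relQ3 k af bf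

/-- Projection onto `H ⊗_R H ⊗_R H`. -/
def prQ3 (af bf : R → H) : (H ⊗[k] H) ⊗[k] H →ₗ[k] HtQ3 k af bf := (relQ3 k af bf).mkQ

variable {A : Type} [Ring A] [Algebra k A]

/-- Representative-level `(Δ ⊗ id)` map. -/
def DL (Δ' : H →ₗ[k] H ⊗[k] H) : H ⊗[k] H →ₗ[k] (H ⊗[k] H) ⊗[k] H :=
  TensorProduct.map Δ' LinearMap.id

/-- Representative-level `(id ⊗ Δ)` map (landing in the left-associated triple product). -/
def DR (Δ' : H →ₗ[k] H ⊗[k] H) : H ⊗[k] H →ₗ[k] (H ⊗[k] H) ⊗[k] H :=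
  (TensorProduct.assoc k H H H).symm.toLinearMap ∘ₗ TensorProduct.map LinearMap.id Δ'

/-- Reassociation `H ⊗ (H ⊗ H) → (H ⊗ H) ⊗ H`. -/
def aInv : H ⊗[k] (H ⊗[k] H) →ₗ[k] (H ⊗[k] H) ⊗[k] H :=
  (TensorProduct.assoc k H H H).symm.toLinearMap

/-- The cocycle identity `((Δ ⊗_R id)F)·F¹² = ((id ⊗_R Δ)F)·F²³` in `H ⊗_R H ⊗_R H`,
stated at the level of a representative `F'` and a representative lift `Δ'` of the
coproduct. -/
def IsCocycle (af bf : R → H) (Δ' : H →ₗ[k] H ⊗[k] H) (F' : H ⊗[k] H) : Prop :=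
  prQ3 k af bf (DL k Δ' F' * (F' ⊗ₜ[k] (1 : H)))
    = prQ3 k af bf (DR k Δ' F' * aInv k ((1 : H) ⊗ₜ[k] F'))

/-- The counit identities `(ε ⊗_R id)F = 1 = (id ⊗_R ε)F`. -/
def IsCounital (s t : R →ₗ[k] H) (ε : H →ₗ[k] R) (F' : H ⊗[k] H) : Prop :=
  e1 k s ε F' = 1 ∧ e2 k t ε F' = 1

end

noncomputable section

open TensorProduct

section MyAux

variable {k H R : Type} [CommRing k] [Ring H] [Algebra k H] [Ring R] [Algebra k R]

lemma my_ev2_tmul (μ : H →ₐ[k] Module.End k R) (x y : H) (a b : R) :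
    ev2 k μ (x ⊗ₜ[k] y) a b = μ x a * μ y b := by
  simp [ev2]

variable (k) in
/-- Evaluation of `(H ⊗ H) ⊗ H` on triples of elements of `R`. -/
def myEv3 (μ : H →ₐ[k] Module.End k R) :
    ((H ⊗[k] H) ⊗[k] H) →ₗ[k] R →ₗ[k] R →ₗ[k] R →ₗ[k] R :=
  TensorProduct.lift (LinearMap.mk₂ k
    (fun u z => (LinearMap.llcomp k R R (R →ₗ[k] R)
        ((LinearMap.mul k R).compl₂ (μ z : R →ₗ[k] R))) ∘ₗ (ev2 k μ u))
    (by intro u v z; apply LinearMap.ext; intro a; apply LinearMap.ext; intro b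
        apply LinearMap.ext; intro c; simp)
    (by intro c u z; apply LinearMap.ext; intro a; apply LinearMap.ext; intro b
        apply LinearMap.ext; intro d; simp)
    (by intro u z w; apply LinearMap.ext; intro a; apply LinearMap.ext; intro b
        apply LinearMap.ext; intro c; simp [mul_add]
        )
    (by intro c u z; apply LinearMap.ext; intro a; apply LinearMap.ext; intro b
        apply LinearMap.ext; intro d; simp [mul_smul_comm]))

lemma myEv3_tmul2 (μ : H →ₐ[k] Module.End k R) (w : H ⊗[k] H) (z : H) (a b c : R) :
    myEv3 k μ (w ⊗ₜ[k] z) a b c = ev2 k μ w a b * μ z c := by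
  simp [myEv3]

lemma myEv3_tmul (μ : H →ₐ[k] Module.End k R) (x y z : H) (a b c : R) :
    myEv3 k μ ((x ⊗ₜ[k] y) ⊗ₜ[k] z) a b c = μ x a * μ y b * μ z c := by
  rw [myEv3_tmul2, my_ev2_tmul]

variable (α : R →ₐ[k] H) (β : R →ₐ[k] Hᵐᵒᵖ) (μ : H →ₐ[k] Module.End k R)
variable (hbl : ∀ (a : R) (h : H) (b : R), μ (α a * h) b = a * μ h b)
variable (hbr : ∀ (a : R) (h : H) (b : R), μ ((β a).unop * h) b = μ h b * a)

include hbl hbr in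
lemma myEv3_rel {w : (H ⊗[k] H) ⊗[k] H}
    (hw : w ∈ relQ3 k (fun a => α a) (fun a => (β a).unop)) :
    myEv3 k μ w = 0 := by
  induction hw using Submodule.span_induction with
  | mem z hz =>
      apply LinearMap.ext; intro a; apply LinearMap.ext; intro b
      apply LinearMap.ext; intro c
      have h1 : ∀ (d r : R), μ (α d) r = d * r := fun d r => by simpa using hbl d 1 r
      have h2 : ∀ (d r : R), μ ((β d).unop) r = r * d := fun d r => by simpa using hbr d 1 r
      rcases hz with ⟨d, x, y, v, rfl⟩ | ⟨d, x, y, v, rfl⟩ <;>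
        rw [sub_eq_add_neg, ← neg_one_smul k, map_add, map_smul] <;>
        simp [myEv3_tmul, map_mul, h1, h2, mul_assoc]
  | zero => rfl
  | add u v _ _ hu hv => rw [map_add, hu, hv, add_zero]
  | smul c u _ hu => rw [map_smul, hu, smul_zero]

include hbl hbr in
lemma myEv3_eq_of_prQ3 {u v : (H ⊗[k] H) ⊗[k] H}
    (h : prQ3 k (fun a => α a) (fun a => (β a).unop) u
       = prQ3 k (fun a => α a) (fun a => (β a).unop) v) :
    myEv3 k μ u = myEv3 k μ v := by
  have hmem : u - v ∈ relQ3 k (fun a => α a) (fun a => (β a).unop) :=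
    (Submodule.Quotient.eq _).mp h
  have := myEv3_rel α β μ hbl hbr hmem
  have h2 : myEv3 k μ (v + (u - v)) = myEv3 k μ v + myEv3 k μ (u - v) := map_add _ _ _
  rw [this, add_zero, show v + (u - v) = u by abel] at h2
  exact h2

lemma my_phiAL_tmul (x y : H) (a : R) :
    phiAL k μ α.toLinearMap (x ⊗ₜ[k] y) a = α (μ x a) * y := by
  simp [phiAL]

include hbl in
lemma my_phiAL_mu (u : H ⊗[k] H) (a b : R) :
    μ (phiAL k μ α.toLinearMap u a) b = ev2 k μ u a b := by
  induction u using TensorProduct.induction_on with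
  | zero => simp
  | tmul x y => rw [my_phiAL_tmul, my_ev2_tmul, hbl]
  | add u v hu hv => simp only [map_add, LinearMap.add_apply, hu, hv]

variable (Δ' : H →ₗ[k] H ⊗[k] H)
variable (hA : ∀ (x : H) (a : R) (u : H ⊗[k] H),
      prQ k (fun a => α a) (fun a => (β a).unop) u
        = prQ k (fun a => α a) (fun a => (β a).unop) (Δ' x) →
      phiAL k μ α.toLinearMap u a = x * α a)

include hbl hA in
lemma my_mu_mul (x : H) (a b : R) : μ x (a * b) = ev2 k μ (Δ' x) a b := by
  have hα : μ (α a) b = a * b := by simpa using hbl a 1 b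
  have h1 : μ (phiAL k μ α.toLinearMap (Δ' x) a) b = ev2 k μ (Δ' x) a b :=
    my_phiAL_mu α μ hbl _ a b
  rw [hA x a (Δ' x) rfl] at h1
  rw [← h1, map_mul μ x (α a), Module.End.mul_apply, hα]

lemma myEv3_mul_tmul (u : (H ⊗[k] H) ⊗[k] H) (p q r : H) (a b c : R) :
    myEv3 k μ (u * ((p ⊗ₜ[k] q) ⊗ₜ[k] r)) a b c
      = myEv3 k μ u (μ p a) (μ q b) (μ r c) := by
  induction u using TensorProduct.induction_on with
  | zero => simp
  | tmul w z =>
      induction w using TensorProduct.induction_on with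
      | zero => simp
      | tmul x y =>
          rw [Algebra.TensorProduct.tmul_mul_tmul, Algebra.TensorProduct.tmul_mul_tmul,
            myEv3_tmul, myEv3_tmul]
          simp [map_mul, Module.End.mul_apply]
      | add w₁ w₂ h₁ h₂ =>
          rw [add_tmul, add_mul, map_add]
          simp only [LinearMap.add_apply, h₁, h₂, map_add, add_tmul]
  | add u v hu hv =>
      rw [add_mul, map_add]
      simp only [LinearMap.add_apply, hu, hv, map_add]

lemma myEv3_aInv (x : H) (w : H ⊗[k] H) (a b c : R) :
    myEv3 k μ (aInv k (x ⊗ₜ[k] w)) a b c = μ x a * ev2 k μ w b c := by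
  induction w using TensorProduct.induction_on with
  | zero => rw [tmul_zero, map_zero]; simp
  | tmul p q =>
      rw [show aInv k (x ⊗ₜ[k] (p ⊗ₜ[k] q)) = (x ⊗ₜ[k] p) ⊗ₜ[k] q from rfl,
        myEv3_tmul, my_ev2_tmul, mul_assoc]
  | add w₁ w₂ h₁ h₂ =>
      rw [tmul_add, map_add]
      simp only [LinearMap.add_apply, h₁, h₂, map_add, mul_add]

include hbl hA in
lemma myEv3_DL (G : H ⊗[k] H) (r s t : R) :
    myEv3 k μ (DL k Δ' G) r s t = ev2 k μ G (r * s) t := by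
  induction G using TensorProduct.induction_on with
  | zero => simp
  | tmul x y =>
      rw [show DL k Δ' (x ⊗ₜ[k] y) = Δ' x ⊗ₜ[k] y from by simp [DL],
        myEv3_tmul2, my_ev2_tmul, my_mu_mul α β μ hbl Δ' hA]
  | add u v hu hv => simp only [map_add, LinearMap.add_apply, hu, hv]

include hbl hA in
lemma myEv3_DR (G : H ⊗[k] H) (r s t : R) :
    myEv3 k μ (DR k Δ' G) r s t = ev2 k μ G r (s * t) := by
  induction G using TensorProduct.induction_on with
  | zero => simp
  | tmul x y =>
      rw [show DR k Δ' (x ⊗ₜ[k] y) = aInv k (x ⊗ₜ[k] Δ' y) from by simp [DR, aInv],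
        myEv3_aInv, my_ev2_tmul, my_mu_mul α β μ hbl Δ' hA]
  | add u v hu hv => simp only [map_add, LinearMap.add_apply, hu, hv]

include hbl hA in
lemma my_lhs (G F : H ⊗[k] H) (a b c : R) :
    myEv3 k μ (DL k Δ' G * (F ⊗ₜ[k] (1 : H))) a b c
      = ev2 k μ G (ev2 k μ F a b) c := by
  induction F using TensorProduct.induction_on with
  | zero => simp
  | tmul p q =>
      rw [myEv3_mul_tmul, myEv3_DL α β μ hbl Δ' hA, my_ev2_tmul]
      simp
  | add u v hu hv =>
      rw [add_tmul, mul_add, map_add]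
      simp only [LinearMap.add_apply, hu, hv, map_add]

include hbl hA in
lemma my_rhs (G F : H ⊗[k] H) (a b c : R) :
    myEv3 k μ (DR k Δ' G * aInv k ((1 : H) ⊗ₜ[k] F)) a b c
      = ev2 k μ G a (ev2 k μ F b c) := by
  induction F using TensorProduct.induction_on with
  | zero => simp [aInv]
  | tmul p q =>
      rw [show aInv k ((1 : H) ⊗ₜ[k] (p ⊗ₜ[k] q)) = ((1 : H) ⊗ₜ[k] p) ⊗ₜ[k] q from rfl,
        myEv3_mul_tmul, myEv3_DR α β μ hbl Δ' hA, my_ev2_tmul]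
      simp
  | add u v hu hv =>
      rw [tmul_add, map_add, mul_add, map_add]
      simp only [LinearMap.add_apply, hu, hv, map_add]

variable (ε : H →ₗ[k] R)

include hbl in
lemma my_e1_mu (hε : ∀ x : H, μ x 1 = ε x) (u : H ⊗[k] H) (a : R) :
    μ (e1 k α.toLinearMap ε u) a = ev2 k μ u 1 a := by
  induction u using TensorProduct.induction_on with
  | zero => simp
  | tmul x y => rw [show e1 k α.toLinearMap ε (x ⊗ₜ[k] y) = α (ε x) * y from by simp [e1],
                  my_ev2_tmul, hbl, hε]
  | add u v hu hv => simp only [map_add, LinearMap.add_apply, hu, hv]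

include hbr in
lemma my_e2_mu (hε : ∀ x : H, μ x 1 = ε x) (u : H ⊗[k] H) (a : R) :
    μ (e2 k (unopL k β) ε u) a = ev2 k μ u a 1 := by
  induction u using TensorProduct.induction_on with
  | zero => simp
  | tmul x y =>
      rw [show e2 k (unopL k β) ε (x ⊗ₜ[k] y) = (β (ε y)).unop * x from by simp [e2, unopL],
        my_ev2_tmul, hbr, hε]
  | add u v hu hv => simp only [map_add, LinearMap.add_apply, hu, hv]

end MyAux

/-- Proposition 4.2 (i).  Let `H` be a Hopf algebroid over `R` with
anchor `μ`, and suppose `F = Σᵢ xᵢ ⊗_R yᵢ ∈ H ⊗_R H` (represented by `F' ∈ H ⊗[k] H`)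
satisfies the cocycle identity `((Δ ⊗_R id)F)·F¹² = ((id ⊗_R Δ)F)·F²³` in
`H ⊗_R H ⊗_R H` and the counit identity `(ε ⊗_R id)F = 1_H = (id ⊗_R ε)F`.
Define `a *_F b = Σᵢ xᵢ(a)·yᵢ(b)`.  Then `(R, *_F)` is an associative algebra with
unit `1_R`. -/
theorem statement2
    (k H R : Type) [CommRing k] [Ring H] [Algebra k H] [Ring R] [Algebra k R]
    (α : R →ₐ[k] H) (β : R →ₐ[k] Hᵐᵒᵖ)
    (hcomm : ∀ a b : R, α a * (β b).unop = (β b).unop * α a)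
    (Δ' : H →ₗ[k] H ⊗[k] H) (ε : H →ₗ[k] R)
    (μ : H →ₐ[k] Module.End k R)
    (hbl : ∀ (a : R) (h : H) (b : R), μ (α a * h) b = a * μ h b)
    (hbr : ∀ (a : R) (h : H) (b : R), μ ((β a).unop * h) b = μ h b * a)
    (hA : ∀ (x : H) (a : R) (u : H ⊗[k] H),
      prQ k (fun a => α a) (fun a => (β a).unop) u
        = prQ k (fun a => α a) (fun a => (β a).unop) (Δ' x) →
      phiAL k μ α.toLinearMap u a = x * α a)
    (hB : ∀ (x : H) (a : R) (u : H ⊗[k] H),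
      prQ k (fun a => α a) (fun a => (β a).unop) u
        = prQ k (fun a => α a) (fun a => (β a).unop) (Δ' x) →
      phiBL k μ (unopL k β) u a = x * (β a).unop)
    (hε : ∀ x : H, μ x 1 = ε x)
    (F' : H ⊗[k] H)
    -- the cocycle identity:
    (hcoc : IsCocycle k (fun a => α a) (fun a => (β a).unop) Δ' F')
    -- the counit identity:
    (hcou : IsCounital k α.toLinearMap (unopL k β) ε F') :
    -- `(R, *_F)` is associative with unit `1_R`, where `a *_F b := F(a, b)`:
    ((∀ a b c : R, ev2 k μ F' (ev2 k μ F' a b) c = ev2 k μ F' a (ev2 k μ F' b c))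
    ∧ (∀ a : R, ev2 k μ F' 1 a = a ∧ ev2 k μ F' a 1 = a)) := by
  have hcoc' : prQ3 k (fun a => α a) (fun a => (β a).unop) (DL k Δ' F' * (F' ⊗ₜ[k] (1 : H)))
      = prQ3 k (fun a => α a) (fun a => (β a).unop)
          (DR k Δ' F' * aInv k ((1 : H) ⊗ₜ[k] F')) := hcoc
  obtain ⟨hc1, hc2⟩ := hcou
  constructor
  · intro a b c
    calc ev2 k μ F' (ev2 k μ F' a b) c
        = myEv3 k μ (DL k Δ' F' * (F' ⊗ₜ[k] (1 : H))) a b c :=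
          (my_lhs α β μ hbl Δ' hA F' F' a b c).symm
      _ = myEv3 k μ (DR k Δ' F' * aInv k ((1 : H) ⊗ₜ[k] F')) a b c := by
          rw [myEv3_eq_of_prQ3 α β μ hbl hbr hcoc']
      _ = ev2 k μ F' a (ev2 k μ F' b c) := my_rhs α β μ hbl Δ' hA F' F' a b c
  · intro a
    constructor
    · rw [← my_e1_mu α μ hbl ε hε F' a, hc1, map_one, Module.End.one_apply]
    · rw [← my_e2_mu β μ hbr ε hε F' a, hc2, map_one, Module.End.one_apply]

end
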